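/- Let X be a metric space, G a topological group acting continuously by isometries on X, and for a closed subgroup H ≤ G let 𝒞_H(x) denote the closed convex hull of the orbit H·x. Then for any x, y ∈ X, the map H ↦ d(y, 𝒞_H(x)) from the Chabauty space 𝒮(G) of closed subgroups of G to ℝ is upper semicontinuous; in particular it is Borel measurable. -/

import Mathlib

open Metric Set Filter Topology MeasureTheory
open scoped ENNReal

class Midpoints (X : Type*) [MetricSpace X] where
  mid : X → X → X
  dist_left : ∀ x y : X, dist x (mid x y) = dist x y / 2
  dist_right : ∀ x y : X, dist y (mid x y) = dist x y / 2
  mid_lipschitz : ∀ x y x' y' : X, dist (mid x y) (mid x' y') ≤ (dist x x' + dist y y') / 2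

variable {X : Type*} [MetricSpace X] [Midpoints X]

def MConvex (C : Set X) : Prop := ∀ x ∈ C, ∀ y ∈ C, Midpoints.mid x y ∈ C

def cchull (A : Set X) : Set X := ⋂₀ {C : Set X | A ⊆ C ∧ IsClosed C ∧ MConvex C}

def orbitHull (H : Subgroup (X ≃ᵢ X)) (x : X) : Set X :=
  cchull {y : X | ∃ h ∈ H, h x = y}

def IsInvariantSet (H : Subgroup (X ≃ᵢ X)) (C : Set X) : Prop :=
  ∀ h ∈ H, ∀ x ∈ C, h x ∈ C

def IsCCI (H : Subgroup (X ≃ᵢ X)) (C : Set X) : Prop :=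
  C.Nonempty ∧ IsClosed C ∧ MConvex C ∧ IsInvariantSet H C

def IsMinimalCCI (H : Subgroup (X ≃ᵢ X)) (C : Set X) : Prop :=
  IsCCI H C ∧ ∀ D : Set X, IsCCI H D → D ⊆ C → D = C

noncomputable def phi (H : Subgroup (X ≃ᵢ X)) (x : X) : ℝ≥0∞ :=
  ⨆ y ∈ orbitHull H x, EMetric.infEdist x (orbitHull H y)

def MinimalAction (H : Subgroup (X ≃ᵢ X)) : Prop := ∀ C : Set X, IsCCI H C → C = univ

def GeodesicRay {Y : Type*} [MetricSpace Y] (γ : ℝ → Y) : Prop :=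
  ∀ s t : ℝ, 0 ≤ s → 0 ≤ t → dist (γ s) (γ t) = |s - t|

noncomputable def busemann {Y : Type*} [MetricSpace Y] (γ : ℝ → Y) (x : Y) : ℝ :=
  limUnder atTop (fun t : ℝ => dist x (γ t) - t)

def FixesAtInfinity (H : Subgroup (X ≃ᵢ X)) : Prop :=
  ∃ γ : ℝ → X, GeodesicRay γ ∧ ∀ h ∈ H, ∃ c : ℝ, ∀ x : X, busemann γ (h x) = busemann γ x + c

/-- Closed convex hull of the orbit of x under a subgroup H of G acting via ρ. -/
def orbitHullHom {G : Type*} [Group G] (ρ : G →* (X ≃ᵢ X)) (H : Subgroup G) (x : X) :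
    Set X :=
  cchull {y : X | ∃ h ∈ H, ρ h x = y}

lemma mid_lipschitzWith : LipschitzWith 1 (fun p : X × X => Midpoints.mid p.1 p.2) := by
  apply LipschitzWith.of_dist_le_mul
  rintro ⟨a, b⟩ ⟨c, d⟩
  simp only [NNReal.coe_one, one_mul, Prod.dist_eq]
  calc dist (Midpoints.mid a b) (Midpoints.mid c d) ≤ (dist a c + dist b d) / 2 :=
        Midpoints.mid_lipschitz a b c d
    _ ≤ max (dist a c) (dist b d) := by
        have h1 := le_max_left (dist a c) (dist b d)
        have h2 := le_max_right (dist a c) (dist b d)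
        linarith

def midIter (A : Set X) : ℕ → Set X
  | 0 => A
  | (k+1) => midIter A k ∪ {z | ∃ a ∈ midIter A k, ∃ b ∈ midIter A k, z = Midpoints.mid a b}

lemma midIter_mono (A : Set X) : Monotone (midIter A) :=
  monotone_nat_of_le_succ fun _ => subset_union_left

lemma midIter_subset {A C : Set X} (hAC : A ⊆ C) (hC : MConvex C) : ∀ k, midIter A k ⊆ C
  | 0 => hAC
  | (k+1) => by
    rintro z (hz | ⟨a, ha, b, hb, rfl⟩)
    · exact midIter_subset hAC hC k hz
    · exact hC a (midIter_subset hAC hC k ha) b (midIter_subset hAC hC k hb)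

lemma mconvex_iUnion_midIter (A : Set X) : MConvex (⋃ k, midIter A k) := by
  intro a ha b hb
  obtain ⟨j, hj⟩ := mem_iUnion.1 ha
  obtain ⟨k, hk⟩ := mem_iUnion.1 hb
  refine mem_iUnion.2 ⟨max j k + 1, Or.inr ⟨a, ?_, b, ?_, rfl⟩⟩
  · exact midIter_mono A (le_max_left j k) hj
  · exact midIter_mono A (le_max_right j k) hk

lemma mconvex_closure {C : Set X} (hC : MConvex C) : MConvex (closure C) := by
  intro a ha b hb
  have h1 : Midpoints.mid a b ∈ (fun p : X × X => Midpoints.mid p.1 p.2) '' closure (C ×ˢ C) := by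
    refine ⟨(a, b), ?_, rfl⟩
    rw [closure_prod_eq]
    exact ⟨ha, hb⟩
  have h2 := image_closure_subset_closure_image (s := C ×ˢ C) mid_lipschitzWith.continuous h1
  refine closure_mono ?_ h2
  rintro z ⟨⟨p, q⟩, ⟨hp, hq⟩, rfl⟩
  exact hC p hp q hq

lemma cchull_eq_closure (A : Set X) : cchull A = closure (⋃ k, midIter A k) := by
  apply Subset.antisymm
  · apply sInter_subset_of_mem
    refine ⟨?_, isClosed_closure, mconvex_closure (mconvex_iUnion_midIter A)⟩
    exact (subset_iUnion (midIter A) 0).trans subset_closure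
  · rintro z hz C ⟨hAC, hCc, hCm⟩
    refine hCc.closure_subset_iff.2 ?_ hz
    exact iUnion_subset fun k => midIter_subset hAC hCm k

lemma midIter_subset_cchull (A : Set X) (k : ℕ) : midIter A k ⊆ cchull A := by
  rw [cchull_eq_closure]
  exact (subset_iUnion (midIter A) k).trans subset_closure

/-- The map H ↦ d(y, 𝒞_H(x)) is upper semicontinuous with respect to
Chabauty convergence of closed subgroups: if Hₙ → H in the Chabauty sense, then
limsupₙ d(y, 𝒞_{Hₙ}(x)) ≤ d(y, 𝒞_H(x)). -/
theorem stmt10 {G : Type*} [Group G] [TopologicalSpace G] [IsTopologicalGroup G]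
    (ρ : G →* (X ≃ᵢ X))
    (hcontact : Continuous fun p : G × X => ρ p.1 p.2)
    (Hseq : ℕ → Subgroup G) (H : Subgroup G)
    (hclseq : ∀ n, IsClosed ((Hseq n : Set G))) (hcl : IsClosed ((H : Set G)))
    (hlim₁ : ∀ h ∈ H, ∃ u : ℕ → G, (∀ n, u n ∈ Hseq n) ∧ Tendsto u atTop (nhds h))
    (hlim₂ : ∀ u : ℕ → G, (∀ n, u n ∈ Hseq n) → ∀ g : G, Tendsto u atTop (nhds g) → g ∈ H)
    (x y : X) :
    Filter.limsup (fun n => EMetric.infEdist y (orbitHullHom ρ (Hseq n) x)) atTop ≤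
      EMetric.infEdist y (orbitHullHom ρ H x) := by
  set A : Set X := {y : X | ∃ h ∈ H, ρ h x = y} with hA
  -- approximation lemma
  have approx : ∀ k, ∀ z ∈ midIter A k,
      ∃ w : ℕ → X, (∀ n, w n ∈ midIter {y : X | ∃ h ∈ Hseq n, ρ h x = y} k) ∧
        Tendsto w atTop (nhds z) := by
    intro k
    induction k with
    | zero =>
      rintro z ⟨h, hh, rfl⟩
      obtain ⟨u, hu, hul⟩ := hlim₁ h hh
      refine ⟨fun n => ρ (u n) x, fun n => ⟨u n, hu n, rfl⟩, ?_⟩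
      have : Tendsto (fun n => ((u n : G), x)) atTop (nhds (h, x)) :=
        hul.prodMk_nhds tendsto_const_nhds
      exact (hcontact.tendsto (h, x)).comp this
    | succ k ih =>
      rintro z (hz | ⟨a, ha, b, hb, rfl⟩)
      · obtain ⟨w, hw, hwl⟩ := ih z hz
        exact ⟨w, fun n => Or.inl (hw n), hwl⟩
      · obtain ⟨wa, hwa, hwal⟩ := ih a ha
        obtain ⟨wb, hwb, hwbl⟩ := ih b hb
        refine ⟨fun n => Midpoints.mid (wa n) (wb n),
          fun n => Or.inr ⟨wa n, hwa n, wb n, hwb n, rfl⟩, ?_⟩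
        have : Tendsto (fun n => (wa n, wb n)) atTop (nhds (a, b)) :=
          hwal.prodMk_nhds hwbl
        exact (mid_lipschitzWith.continuous.tendsto (a, b)).comp this
  -- main estimate: for any z in the midpoint union, limsup ≤ edist y z
  have key : ∀ z ∈ ⋃ k, midIter A k,
      Filter.limsup (fun n => EMetric.infEdist y (orbitHullHom ρ (Hseq n) x)) atTop ≤
        edist y z := by
    intro z hz
    obtain ⟨k, hk⟩ := mem_iUnion.1 hz
    obtain ⟨w, hw, hwl⟩ := approx k z hk
    have hle : ∀ n, EMetric.infEdist y (orbitHullHom ρ (Hseq n) x) ≤ edist y (w n) := by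
      intro n
      exact EMetric.infEdist_le_edist_of_mem
        (midIter_subset_cchull {y : X | ∃ h ∈ Hseq n, ρ h x = y} k (hw n))
    have htend : Tendsto (fun n => edist y (w n)) atTop (nhds (edist y z)) :=
      (Filter.Tendsto.edist tendsto_const_nhds hwl)
    calc Filter.limsup (fun n => EMetric.infEdist y (orbitHullHom ρ (Hseq n) x)) atTop ≤
        Filter.limsup (fun n => edist y (w n)) atTop :=
          Filter.limsup_le_limsup (Eventually.of_forall hle)
      _ = edist y z := htend.limsup_eq
  have : Filter.limsup (fun n => EMetric.infEdist y (orbitHullHom ρ (Hseq n) x)) atTop ≤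
      EMetric.infEdist y (⋃ k, midIter A k) := by
    rw [EMetric.infEdist]
    exact le_iInf₂ key
  refine this.trans ?_
  rw [orbitHullHom, ← hA, cchull_eq_closure]
  exact (Metric.infEDist_closure (x := y)).ge
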